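/- Let A : ℝ^d → ℝ^{m×n} be differentiable (Fréchet) at x₀ ∈ ℝ^d, write A₀ = A(x₀), and suppose rank(A(x)) = rank(A(x₀)) for all x in a neighborhood of x₀. Let A⁺ : ℝ^d → ℝ^{n×m} assign to each x the Moore–Penrose pseudoinverse of A(x). Then A⁺ is differentiable at x₀, and for every direction h ∈ ℝ^d, writing Δ = DA(x₀)h ∈ ℝ^{m×n}, its derivative is DA⁺(x₀)h = −A₀⁺ Δ A₀⁺ + A₀⁺ A₀⁺ᵀ Δᵀ (I_m − A₀A₀⁺) + (I_n − A₀⁺A₀) Δᵀ A₀⁺ᵀ A₀⁺. -/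

import Mathlib

open Matrix
attribute [local instance] Matrix.normedAddCommGroup Matrix.normedSpace

variable {E : Type*} [NormedAddCommGroup E] [NormedSpace ℝ E]

noncomputable def mulCLM (a b c : ℕ) :
    Matrix (Fin a) (Fin b) ℝ →L[ℝ] Matrix (Fin b) (Fin c) ℝ →L[ℝ] Matrix (Fin a) (Fin c) ℝ :=
  LinearMap.toContinuousLinearMap <|
  { toFun := fun M => LinearMap.toContinuousLinearMap <|
      { toFun := fun N => M * N
        map_add' := fun x y => Matrix.mul_add M x y
        map_smul' := fun r x => (Matrix.mul_smul M r x) }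
    map_add' := by intro x y; ext N i j; simp [Matrix.add_mul]
    map_smul' := by intro r x; ext N i j; simp [Matrix.smul_mul] }

@[simp] lemma mulCLM_apply {a b c : ℕ} (M : Matrix (Fin a) (Fin b) ℝ)
    (N : Matrix (Fin b) (Fin c) ℝ) : mulCLM a b c M N = M * N := rfl

theorem HasFDerivAt.matmul {a b c : ℕ} {f : E → Matrix (Fin a) (Fin b) ℝ}
    {g : E → Matrix (Fin b) (Fin c) ℝ} {f' : E →L[ℝ] Matrix (Fin a) (Fin b) ℝ}
    {g' : E →L[ℝ] Matrix (Fin b) (Fin c) ℝ} {x : E}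
    (hf : HasFDerivAt f f' x) (hg : HasFDerivAt g g' x) :
    HasFDerivAt (fun y => f y * g y)
      (HAdd.hAdd (α := E →L[ℝ] Matrix (Fin a) (Fin c) ℝ) (β := E →L[ℝ] Matrix (Fin a) (Fin c) ℝ)
        (γ := E →L[ℝ] Matrix (Fin a) (Fin c) ℝ)
        (((mulCLM a b c).flip (g x)).comp f') (((mulCLM a b c) (f x)).comp g')) x := by
  have := ((mulCLM a b c).isBoundedBilinearMap.hasFDerivAt (f x, g x)).comp x (HasFDerivAt.prodMk hf hg)
  refine this.congr_fderiv ?_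
  ext h : 1
  exact add_comm _ _

theorem DifferentiableAt.matmul {a b c : ℕ} {f : E → Matrix (Fin a) (Fin b) ℝ}
    {g : E → Matrix (Fin b) (Fin c) ℝ} {x : E}
    (hf : DifferentiableAt ℝ f x) (hg : DifferentiableAt ℝ g x) :
    DifferentiableAt ℝ (fun y => f y * g y) x :=
  (HasFDerivAt.matmul hf.hasFDerivAt hg.hasFDerivAt).differentiableAt

theorem fderiv_matmul {a b c : ℕ} {f : E → Matrix (Fin a) (Fin b) ℝ}
    {g : E → Matrix (Fin b) (Fin c) ℝ} {x : E}
    (hf : DifferentiableAt ℝ f x) (hg : DifferentiableAt ℝ g x) (h : E) :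
    fderiv ℝ (fun y => f y * g y) x h = fderiv ℝ f x h * g x + f x * fderiv ℝ g x h := by
  rw [(HasFDerivAt.matmul hf.hasFDerivAt hg.hasFDerivAt).fderiv]
  rfl

noncomputable def transCLM (a b : ℕ) :
    Matrix (Fin a) (Fin b) ℝ →L[ℝ] Matrix (Fin b) (Fin a) ℝ :=
  LinearMap.toContinuousLinearMap (Matrix.transposeLinearEquiv (Fin a) (Fin b) ℝ ℝ).toLinearMap

@[simp] lemma transCLM_apply {a b : ℕ} (M : Matrix (Fin a) (Fin b) ℝ) :
    transCLM a b M = Mᵀ := rfl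

theorem HasFDerivAt.mtrans {a b : ℕ} {f : E → Matrix (Fin a) (Fin b) ℝ}
    {f' : E →L[ℝ] Matrix (Fin a) (Fin b) ℝ} {x : E} (hf : HasFDerivAt f f' x) :
    HasFDerivAt (fun y => (f y)ᵀ) ((transCLM a b).comp f') x :=
  (transCLM a b).hasFDerivAt.comp x hf

theorem DifferentiableAt.mtrans {a b : ℕ} {f : E → Matrix (Fin a) (Fin b) ℝ} {x : E}
    (hf : DifferentiableAt ℝ f x) : DifferentiableAt ℝ (fun y => (f y)ᵀ) x :=
  (hf.hasFDerivAt.mtrans).differentiableAt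

theorem fderiv_mtrans {a b : ℕ} {f : E → Matrix (Fin a) (Fin b) ℝ} {x : E}
    (hf : DifferentiableAt ℝ f x) (h : E) :
    fderiv ℝ (fun y => (f y)ᵀ) x h = (fderiv ℝ f x h)ᵀ := by
  rw [hf.hasFDerivAt.mtrans.fderiv]; rfl

theorem differentiableAt_matrix {a b : ℕ} {f : E → Matrix (Fin a) (Fin b) ℝ} {x : E} :
    DifferentiableAt ℝ f x ↔ ∀ i j, DifferentiableAt ℝ (fun y => f y i j) x := by
  exact (differentiableAt_pi (Φ := f)).trans (forall_congr' fun i => differentiableAt_pi)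

theorem DifferentiableAt.matrix_det {a : ℕ} {f : E → Matrix (Fin a) (Fin a) ℝ} {x : E}
    (hf : DifferentiableAt ℝ f x) : DifferentiableAt ℝ (fun y => (f y).det) x := by
  simp only [Matrix.det_apply']
  apply DifferentiableAt.fun_sum
  intro σ _
  exact ((HasFDerivAt.finset_prod (u := Finset.univ)
    (fun i _ => ((differentiableAt_matrix.1 hf (σ i) i)).hasFDerivAt)).differentiableAt).const_mul _

theorem DifferentiableAt.matrix_adjugate {a : ℕ} {f : E → Matrix (Fin a) (Fin a) ℝ} {x : E}
    (hf : DifferentiableAt ℝ f x) : DifferentiableAt ℝ (fun y => (f y).adjugate) x := by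
  rw [differentiableAt_matrix]
  intro i j
  simp only [Matrix.adjugate_apply]
  apply DifferentiableAt.matrix_det
  rw [differentiableAt_matrix]
  intro k l
  simp only [Matrix.updateRow_apply]
  by_cases hk : k = j
  · simp [hk]
  · simp only [hk, if_false]
    exact differentiableAt_matrix.1 hf k l

theorem DifferentiableAt.matrix_inv {a : ℕ} {f : E → Matrix (Fin a) (Fin a) ℝ} {x : E}
    (hf : DifferentiableAt ℝ f x) (hu : IsUnit (f x).det) :
    DifferentiableAt ℝ (fun y => (f y)⁻¹) x := by
  have : (fun y => (f y)⁻¹) = fun y => ((f y).det)⁻¹ • (f y).adjugate := by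
    funext y
    rw [Matrix.inv_def, Ring.inverse_eq_inv]
  rw [this]
  exact (hf.matrix_det.inv (IsUnit.ne_zero hu)).smul hf.matrix_adjugate

lemma Matrix.eq_of_mulVec_eq' {a b : ℕ} {M N : Matrix (Fin a) (Fin b) ℝ}
    (h : ∀ v, M.mulVec v = N.mulVec v) : M = N := by
  ext i j
  have := congrFun (h (Pi.single j 1)) i
  simpa [Matrix.mulVec_single] using this

theorem diffP {d m n : ℕ}
    (A : (Fin d → ℝ) → Matrix (Fin m) (Fin n) ℝ)
    (P : (Fin d → ℝ) → Matrix (Fin n) (Fin m) ℝ)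
    (hP : ∀ x, A x * P x * A x = A x ∧ P x * A x * P x = P x ∧
      (A x * P x)ᵀ = A x * P x ∧ (P x * A x)ᵀ = P x * A x)
    (x₀ : Fin d → ℝ)
    (hA : DifferentiableAt ℝ A x₀)
    (hrank : ∀ᶠ x in nhds x₀, (A x).rank = (A x₀).rank) :
    DifferentiableAt ℝ P x₀ := by
  classical
  set r := (A x₀).rank with hr
  -- a basis of the column space of `A x₀`
  set V := LinearMap.range (A x₀).mulVecLin with hV
  have hfr : Module.finrank ℝ V = r := rfl
  let b : Module.Basis (Fin r) ℝ V := Module.finBasisOfFinrankEq ℝ V hfr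
  have hu : ∀ i : Fin r, ∃ y, (A x₀).mulVec y = (b i : Fin m → ℝ) := by
    intro i
    obtain ⟨y, hy⟩ := LinearMap.mem_range.mp (b i).2
    exact ⟨y, by simpa [Matrix.mulVecLin_apply] using hy⟩
  choose u hu using hu
  set S : Matrix (Fin n) (Fin r) ℝ := Matrix.of (fun i j => u j i) with hS
  have hBv : ∀ v, (A x₀ * S).mulVec v = ∑ j, v j • (b j : Fin m → ℝ) := by
    intro v
    rw [← Matrix.mulVec_mulVec]
    have h1 : S.mulVec v = ∑ j, v j • u j := by
      funext i
      simp [Matrix.mulVec, dotProduct, hS, Finset.sum_apply, mul_comm]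
    rw [h1]
    have h2 : (A x₀).mulVec (∑ j, v j • u j) = ∑ j, v j • (A x₀).mulVec (u j) := by
      simp only [← Matrix.mulVecLin_apply, map_sum, LinearMap.map_smul]
    rw [h2]
    exact Finset.sum_congr rfl fun j _ => by rw [hu j]
  have hGunit : IsUnit ((A x₀ * S)ᵀ * (A x₀ * S)) := by
    rw [← Matrix.mulVec_injective_iff_isUnit]
    intro x y hxy
    have hsub : ((A x₀ * S)ᵀ * (A x₀ * S)).mulVec (x - y) = 0 := by
      rw [Matrix.mulVec_sub, hxy, sub_self]
    have hB0 : (A x₀ * S).mulVec (x - y) = 0 := by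
      rw [← Matrix.mulVec_mulVec] at hsub
      have hdot := congrArg (fun w => dotProduct (x - y) w) hsub
      rw [dotProduct_mulVec, Matrix.vecMul_transpose, dotProduct_zero] at hdot
      exact dotProduct_self_eq_zero.mp hdot
    have hzero : ∑ j, (x - y) j • b j = (0 : V) := by
      have hcoe : ((∑ j, (x - y) j • b j : V) : Fin m → ℝ)
          = ((0 : V) : Fin m → ℝ) := by
        have h1 : ((∑ j, (x - y) j • b j : V) : Fin m → ℝ)
            = ∑ j, (x - y) j • (b j : Fin m → ℝ) := by simp
        rw [h1, ← hBv (x - y), hB0]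
        simp
      exact Subtype.coe_injective hcoe
    have hlin := Fintype.linearIndependent_iff.mp b.linearIndependent (fun j => (x - y) j) hzero
    funext i
    have := hlin i
    simpa [sub_eq_zero] using this
  have hGdu : IsUnit ((A x₀ * S)ᵀ * (A x₀ * S)).det := (Matrix.isUnit_iff_isUnit_det _).mp hGunit
  set Bf : (Fin d → ℝ) → Matrix (Fin m) (Fin r) ℝ := fun x => A x * S with hBf
  set Gf : (Fin d → ℝ) → Matrix (Fin r) (Fin r) ℝ := fun x => (Bf x)ᵀ * Bf x with hGf
  set Qf : (Fin d → ℝ) → Matrix (Fin m) (Fin m) ℝ := fun x => Bf x * (Gf x)⁻¹ * (Bf x)ᵀ with hQf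
  set Mf : (Fin d → ℝ) → Matrix (Fin m) (Fin m) ℝ := fun x => A x * (A x)ᵀ + 1 - Qf x with hMf
  have key : ∀ x, (Gf x).det ≠ 0 → (A x).rank = r →
      (P x = (A x)ᵀ * (Mf x)⁻¹ ∧ IsUnit (Mf x).det) := by
    intro x hdet hrk
    obtain ⟨h1, h2, h3, h4⟩ := hP x
    have hGd : IsUnit (Gf x).det := isUnit_iff_ne_zero.mpr hdet
    have hGu : IsUnit (Gf x) := (Matrix.isUnit_iff_isUnit_det _).mpr hGd
    have hQB : Qf x * Bf x = Bf x := by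
      show Bf x * (Gf x)⁻¹ * (Bf x)ᵀ * Bf x = Bf x
      rw [Matrix.mul_assoc (Bf x * (Gf x)⁻¹) ((Bf x)ᵀ) (Bf x)]
      rw [show (Bf x)ᵀ * Bf x = Gf x from rfl]
      rw [Matrix.mul_assoc (Bf x) ((Gf x)⁻¹) (Gf x), Matrix.nonsing_inv_mul _ hGd,
        Matrix.mul_one]
    have hrkG : (Gf x).rank = r := by
      rw [Matrix.rank_of_isUnit _ hGu, Fintype.card_fin]
    have hrkB : (Bf x).rank = r := by
      have e2 : ((Bf x)ᵀ * Bf x).rank = (Bf x).rank := Matrix.rank_transpose_mul_self (Bf x)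
      rw [← e2]; exact hrkG
    have hrange : LinearMap.range (Bf x).mulVecLin = LinearMap.range (A x).mulVecLin := by
      apply Submodule.eq_of_le_of_finrank_eq
      · rw [show (Bf x).mulVecLin = ((A x).mulVecLin).comp S.mulVecLin from
          (Matrix.mulVecLin_mul (A x) S)]
        exact LinearMap.range_comp_le_range _ _
      · exact hrkB.trans hrk.symm
    have hQA : Qf x * A x = A x := by
      apply Matrix.eq_of_mulVec_eq'
      intro v
      rw [← Matrix.mulVec_mulVec]
      have hmem : (A x).mulVec v ∈ LinearMap.range (Bf x).mulVecLin := by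
        rw [hrange]; exact ⟨v, rfl⟩
      obtain ⟨w, hw⟩ := hmem
      have hw' : (Bf x).mulVec w = (A x).mulVec v := hw
      rw [← hw', Matrix.mulVec_mulVec, hQB]
    have hGsym : (Gf x)ᵀ = Gf x := by
      show ((Bf x)ᵀ * Bf x)ᵀ = _
      rw [Matrix.transpose_mul, Matrix.transpose_transpose]
    have hQsym : (Qf x)ᵀ = Qf x := by
      show (Bf x * (Gf x)⁻¹ * (Bf x)ᵀ)ᵀ = _
      rw [Matrix.transpose_mul (Bf x * (Gf x)⁻¹) ((Bf x)ᵀ),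
        Matrix.transpose_mul (Bf x) ((Gf x)⁻¹), Matrix.transpose_transpose,
        Matrix.transpose_nonsing_inv, hGsym, ← Matrix.mul_assoc]
    have hQAP : Qf x = A x * P x := by
      have s2 : Qf x * (A x * P x) = A x * P x := by rw [← Matrix.mul_assoc, hQA]
      have hAPB : A x * P x * Bf x = Bf x := by
        show A x * P x * (A x * S) = A x * S
        rw [← Matrix.mul_assoc, h1]
      have s1 : A x * P x * Qf x = Qf x := by
        show A x * P x * (Bf x * (Gf x)⁻¹ * (Bf x)ᵀ) = Qf x
        rw [← Matrix.mul_assoc, ← Matrix.mul_assoc, hAPB]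
      calc Qf x = (Qf x)ᵀ := hQsym.symm
        _ = (A x * P x * Qf x)ᵀ := by rw [s1]
        _ = (Qf x)ᵀ * (A x * P x)ᵀ := by rw [Matrix.transpose_mul]
        _ = Qf x * (A x * P x) := by rw [hQsym, h3]
        _ = A x * P x := s2
    have hMQ : Mf x = A x * (A x)ᵀ + 1 - A x * P x := by
      show A x * (A x)ᵀ + 1 - Qf x = _
      rw [hQAP]
    have k1 : (A x)ᵀ * (P x)ᵀ = P x * A x := by rw [← Matrix.transpose_mul, h4]
    have F1 : P x * (A x * (A x)ᵀ) = (A x)ᵀ := by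
      calc P x * (A x * (A x)ᵀ) = P x * A x * (A x)ᵀ := by rw [Matrix.mul_assoc]
        _ = (P x * A x)ᵀ * (A x)ᵀ := by rw [h4]
        _ = (A x * (P x * A x))ᵀ := by rw [← Matrix.transpose_mul]
        _ = (A x * P x * A x)ᵀ := by rw [Matrix.mul_assoc]
        _ = (A x)ᵀ := by rw [h1]
    have F2 : (A x)ᵀ * (A x * P x) = (A x)ᵀ := by
      calc (A x)ᵀ * (A x * P x) = (A x)ᵀ * (A x * P x)ᵀ := by rw [h3]
        _ = (A x * P x * A x)ᵀ := by rw [← Matrix.transpose_mul]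
        _ = (A x)ᵀ := by rw [h1]
    have sq : ∀ u' v' w' : Matrix (Fin m) (Fin m) ℝ, u' * v' = w' → u' * w' = u' →
        w' * v' = v' → w' * w' = w' → (u' + 1 - w') * (v' + 1 - w') = 1 := by
      intro u' v' w' e1 e2 e3 e4
      linear_combination (norm := noncomm_ring) e1 - e2 - e3 + e4
    have euv : (A x * (A x)ᵀ) * ((P x)ᵀ * P x) = A x * P x := by
      rw [Matrix.mul_assoc (A x) ((A x)ᵀ) _, ← Matrix.mul_assoc ((A x)ᵀ) ((P x)ᵀ) (P x),
        k1, Matrix.mul_assoc (P x) (A x) (P x)]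
      rw [← Matrix.mul_assoc (P x) (A x) (P x), h2]
    have euw : (A x * (A x)ᵀ) * (A x * P x) = A x * (A x)ᵀ := by
      rw [Matrix.mul_assoc (A x) ((A x)ᵀ) (A x * P x), F2]
    have ewv : (A x * P x) * ((P x)ᵀ * P x) = (P x)ᵀ * P x := by
      have hAPPt : (A x * P x) * (P x)ᵀ = (P x)ᵀ := by
        calc (A x * P x) * (P x)ᵀ = (A x * P x)ᵀ * (P x)ᵀ := by rw [h3]
          _ = (P x * (A x * P x))ᵀ := by rw [← Matrix.transpose_mul]
          _ = (P x * A x * P x)ᵀ := by rw [← Matrix.mul_assoc]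
          _ = (P x)ᵀ := by rw [h2]
      rw [← Matrix.mul_assoc, hAPPt]
    have eww : (A x * P x) * (A x * P x) = A x * P x := by
      rw [← Matrix.mul_assoc, h1]
    have hMN : Mf x * ((P x)ᵀ * P x + 1 - A x * P x) = 1 := by
      rw [hMQ]; exact sq _ _ _ euv euw ewv eww
    have hMdet : IsUnit (Mf x).det := Matrix.isUnit_det_of_right_inverse hMN
    have hPM : P x * Mf x = (A x)ᵀ := by
      rw [hMQ, Matrix.mul_sub, Matrix.mul_add, Matrix.mul_one, F1, ← Matrix.mul_assoc, h2]
      abel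
    have hfinal : P x = (A x)ᵀ * (Mf x)⁻¹ := by
      calc P x = P x * (1 : Matrix (Fin m) (Fin m) ℝ) := by rw [Matrix.mul_one]
        _ = P x * (Mf x * (Mf x)⁻¹) := by rw [Matrix.mul_nonsing_inv _ hMdet]
        _ = P x * Mf x * (Mf x)⁻¹ := by rw [← Matrix.mul_assoc]
        _ = (A x)ᵀ * (Mf x)⁻¹ := by rw [hPM]
    exact ⟨hfinal, hMdet⟩
  have hkey₀ := key x₀ hGdu.ne_zero rfl
  have hBdiff : DifferentiableAt ℝ Bf x₀ := hA.matmul (differentiableAt_const S)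
  have hGdiff : DifferentiableAt ℝ Gf x₀ := hBdiff.mtrans.matmul hBdiff
  have hQdiff : DifferentiableAt ℝ Qf x₀ :=
    (hBdiff.matmul (hGdiff.matrix_inv hGdu)).matmul hBdiff.mtrans
  have hMdiff : DifferentiableAt ℝ Mf x₀ :=
    ((hA.matmul hA.mtrans).add (differentiableAt_const 1)).sub hQdiff
  have hFdiff : DifferentiableAt ℝ (fun x => (A x)ᵀ * (Mf x)⁻¹) x₀ :=
    hA.mtrans.matmul (hMdiff.matrix_inv hkey₀.2)
  have hev : P =ᶠ[nhds x₀] fun x => (A x)ᵀ * (Mf x)⁻¹ := by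
    have hGdet : DifferentiableAt ℝ (fun x => (Gf x).det) x₀ := hGdiff.matrix_det
    filter_upwards [hGdet.continuousAt.eventually_ne hGdu.ne_zero, hrank] with x hx1 hx2
    exact (key x hx1 hx2).1
  exact hFdiff.congr_of_eventuallyEq hev


lemma combine {m n : ℕ} (a dd : Matrix (Fin m) (Fin n) ℝ) (p q : Matrix (Fin n) (Fin m) ℝ)
    (h1 : a*p*a = a) (h2 : p*a*p = p) (h3 : (a*p)ᵀ = a*p) (h4 : (p*a)ᵀ = p*a)
    (D2 : (q*a + p*dd)*p + p*a*q = q)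
    (D3 : (dd*p + a*q)ᵀ = dd*p + a*q)
    (D4 : (q*a + p*dd)ᵀ = q*a + p*dd)
    (D5 : (dd*aᵀ + a*ddᵀ)*pᵀ + a*aᵀ*qᵀ = dd)
    (D6 : (qᵀ*aᵀ + pᵀ*ddᵀ)*a + pᵀ*aᵀ*dd = dd) :
    q = -(p*dd*p) + p*pᵀ*ddᵀ*(1 - a*p) + (1 - p*a)*ddᵀ*pᵀ*p := by
  have k1 : aᵀ*pᵀ = p*a := by rw [← Matrix.transpose_mul, h4]
  have k2 : pᵀ*aᵀ = a*p := by rw [← Matrix.transpose_mul, h3]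
  have F1 : p*(a*aᵀ) = aᵀ := by
    calc p*(a*aᵀ) = p*a*aᵀ := by rw [Matrix.mul_assoc]
      _ = (p*a)ᵀ*aᵀ := by rw [h4]
      _ = (a*(p*a))ᵀ := by rw [← Matrix.transpose_mul]
      _ = (a*p*a)ᵀ := by rw [Matrix.mul_assoc]
      _ = aᵀ := by rw [h1]
  have F2 : aᵀ*(a*p) = aᵀ := by
    calc aᵀ*(a*p) = aᵀ*(a*p)ᵀ := by rw [h3]
      _ = (a*p*a)ᵀ := by rw [← Matrix.transpose_mul]
      _ = aᵀ := by rw [h1]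
  -- normalize the derivative identities
  simp only [Matrix.transpose_add, Matrix.transpose_mul, Matrix.add_mul, Matrix.mul_add,
    Matrix.mul_assoc] at D2 D3 D4 D5 D6
  -- L1 : right-multiply D4 by p
  have L1 := congrArg (fun X => X * p) D4
  simp only [Matrix.add_mul, Matrix.mul_assoc] at L1
  -- L2 : left-multiply D3 by p
  have L2 := congrArg (fun X => p * X) D3
  simp only [Matrix.mul_add, ← Matrix.mul_assoc] at L2
  simp only [Matrix.mul_assoc] at L2
  -- E5 : p * D5 * p
  have E5 := congrArg (fun X => p * (X * p)) D5
  simp only [Matrix.add_mul, Matrix.mul_add, Matrix.mul_assoc] at E5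
  rw [show aᵀ*(pᵀ*p) = p by rw [← Matrix.mul_assoc, k1, h2]] at E5
  rw [show a*(aᵀ*(qᵀ*p)) = (a*aᵀ)*(qᵀ*p) from (Matrix.mul_assoc _ _ _).symm] at E5
  rw [show p*((a*aᵀ)*(qᵀ*p)) = (p*(a*aᵀ))*(qᵀ*p) from (Matrix.mul_assoc _ _ _).symm] at E5
  rw [F1] at E5
  -- E6 : p * D6 * p
  have E6 := congrArg (fun X => p * (X * p)) D6
  simp only [Matrix.add_mul, Matrix.mul_add, Matrix.mul_assoc] at E6
  rw [show aᵀ*(a*p) = aᵀ from F2] at E6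
  rw [show pᵀ*(aᵀ*(dd*p)) = (pᵀ*aᵀ)*(dd*p) from (Matrix.mul_assoc _ _ _).symm] at E6
  rw [k2] at E6
  rw [show p*((a*p)*(dd*p)) = (p*(a*p))*(dd*p) from (Matrix.mul_assoc _ _ _).symm] at E6
  rw [show p*(a*p) = p by rw [← Matrix.mul_assoc, h2]] at E6
  -- normalize goal
  simp only [Matrix.mul_sub, Matrix.sub_mul, Matrix.mul_one, Matrix.one_mul, Matrix.mul_assoc]
  linear_combination (norm := abel) E5 + E6 - D2 - L1 - L2

/-- Differentiability of the Moore–Penrose pseudoinverse under local rank constancy,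
together with the explicit formula for its derivative. -/
theorem pseudoinverse_differentiableAt
    {d m n : ℕ}
    (A : (Fin d → ℝ) → Matrix (Fin m) (Fin n) ℝ)
    (P : (Fin d → ℝ) → Matrix (Fin n) (Fin m) ℝ)
    (hP : ∀ x, A x * P x * A x = A x ∧ P x * A x * P x = P x ∧
      (A x * P x)ᵀ = A x * P x ∧ (P x * A x)ᵀ = P x * A x)
    (x₀ : Fin d → ℝ)
    (hA : DifferentiableAt ℝ A x₀)
    (hrank : ∀ᶠ x in nhds x₀, (A x).rank = (A x₀).rank) :
    DifferentiableAt ℝ P x₀ ∧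
      ∀ h : Fin d → ℝ,
        fderiv ℝ P x₀ h =
          - (P x₀ * fderiv ℝ A x₀ h * P x₀)
          + P x₀ * (P x₀)ᵀ * (fderiv ℝ A x₀ h)ᵀ * (1 - A x₀ * P x₀)
          + (1 - P x₀ * A x₀) * (fderiv ℝ A x₀ h)ᵀ * (P x₀)ᵀ * P x₀ := by
  have hp : DifferentiableAt ℝ P x₀ := diffP A P hP x₀ hA hrank
  refine ⟨hp, fun h => ?_⟩
  obtain ⟨h1, h2, h3, h4⟩ := hP x₀
  -- pointwise identities valid everywhere
  have hH5 : (fun x => A x * (A x)ᵀ * (P x)ᵀ) = A := by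
    funext x
    obtain ⟨g1, g2, g3, g4⟩ := hP x
    have kk1 : (A x)ᵀ * (P x)ᵀ = P x * A x := by rw [← Matrix.transpose_mul, g4]
    calc A x * (A x)ᵀ * (P x)ᵀ = A x * ((A x)ᵀ * (P x)ᵀ) := Matrix.mul_assoc _ _ _
      _ = A x * (P x * A x) := by rw [kk1]
      _ = A x * P x * A x := (Matrix.mul_assoc _ _ _).symm
      _ = A x := g1
  have hH6 : (fun x => (P x)ᵀ * (A x)ᵀ * A x) = A := by
    funext x
    obtain ⟨g1, g2, g3, g4⟩ := hP x
    have kk2 : (P x)ᵀ * (A x)ᵀ = A x * P x := by rw [← Matrix.transpose_mul, g3]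
    calc (P x)ᵀ * (A x)ᵀ * A x = (A x * P x) * A x := by rw [kk2]
      _ = A x := g1
  -- differentiated identities
  have e2 : fderiv ℝ (fun x => P x * A x * P x) x₀ h = fderiv ℝ P x₀ h := by
    rw [show (fun x => P x * A x * P x) = P from funext fun x => (hP x).2.1]
  rw [fderiv_matmul (hp.matmul hA) hp h, fderiv_matmul hp hA h] at e2
  have e3 : fderiv ℝ (fun x => (A x * P x)ᵀ) x₀ h
      = fderiv ℝ (fun x => A x * P x) x₀ h := by
    rw [show (fun x => (A x * P x)ᵀ) = (fun x => A x * P x) from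
      funext fun x => (hP x).2.2.1]
  rw [fderiv_mtrans (hA.matmul hp) h, fderiv_matmul hA hp h] at e3
  have e4 : fderiv ℝ (fun x => (P x * A x)ᵀ) x₀ h
      = fderiv ℝ (fun x => P x * A x) x₀ h := by
    rw [show (fun x => (P x * A x)ᵀ) = (fun x => P x * A x) from
      funext fun x => (hP x).2.2.2]
  rw [fderiv_mtrans (hp.matmul hA) h, fderiv_matmul hp hA h] at e4
  have e5 : fderiv ℝ (fun x => A x * (A x)ᵀ * (P x)ᵀ) x₀ h = fderiv ℝ A x₀ h := by
    rw [hH5]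
  rw [fderiv_matmul (hA.matmul hA.mtrans) hp.mtrans h, fderiv_matmul hA hA.mtrans h,
    fderiv_mtrans hA h, fderiv_mtrans hp h] at e5
  have e6 : fderiv ℝ (fun x => (P x)ᵀ * (A x)ᵀ * A x) x₀ h = fderiv ℝ A x₀ h := by
    rw [hH6]
  rw [fderiv_matmul (hp.mtrans.matmul hA.mtrans) hA h, fderiv_matmul hp.mtrans hA.mtrans h,
    fderiv_mtrans hp h, fderiv_mtrans hA h] at e6
  exact combine (A x₀) (fderiv ℝ A x₀ h) (P x₀) (fderiv ℝ P x₀ h)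
    h1 h2 h3 h4 e2 e3 e4 e5 e6
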